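/- Let R_n denote the number of restricted ascent sequences of length n. Then R_0 = 1 and, for every n ≥ 0, R_{n+1} = Σ_{k=0}^{n} R_k·R_{n-k}. -/

import Mathlib

/-!
STATEMENT 17: With R_n the number of restricted ascent sequences of length n,
R_0 = 1 and R_{n+1} = Σ_{k=0}^{n} R_k·R_{n-k} for every n ≥ 0.
-/

/-- Number of ascents of a finite sequence of naturals. -/
def ascents (l : List ℕ) : ℕ := (l.zip l.tail).countP fun p => decide (p.1 < p.2)

/-- `l` is a restricted ascent sequence: `x₁ = 0` and, for `i ≥ 2`,
`max(m-1,0) ≤ xᵢ ≤ 1 + asc(x₁,…,x_{i-1})` where `m = max(x₁,…,x_{i-1})`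
(here `m - 1` is truncated subtraction, i.e. `max(m-1,0)`).
The empty sequence is a restricted ascent sequence. -/
def IsRestrictedAscentSeq (l : List ℕ) : Prop :=
  ∀ i (h : i < l.length),
    if i = 0 then l.get ⟨i, h⟩ = 0
    else (l.take i).foldr max 0 - 1 ≤ l.get ⟨i, h⟩ ∧ l.get ⟨i, h⟩ ≤ ascents (l.take i) + 1

/-- The number of restricted ascent sequences of length `n`. -/
noncomputable def R (n : ℕ) : ℕ :=
  Nat.card {l : List ℕ // IsRestrictedAscentSeq l ∧ l.length = n}

-- max and last-value abbreviations
def MM (l : List ℕ) : ℕ := l.foldr max 0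
def LV (l : List ℕ) : ℕ := l.getLast?.getD 0

lemma foldr_max_acc (l : List ℕ) : ∀ b : ℕ, l.foldr max b = max (l.foldr max 0) b := by
  induction l with
  | nil => intro b; simp
  | cons a t ih => intro b; simp only [List.foldr_cons, ih b]; omega

lemma MM_concat (l : List ℕ) (v : ℕ) : MM (l ++ [v]) = max (MM l) v := by
  unfold MM
  rw [List.foldr_append, List.foldr_cons, List.foldr_nil, foldr_max_acc]
  omega

lemma LV_concat (l : List ℕ) (v : ℕ) : LV (l ++ [v]) = v := by
  unfold LV; rw [List.getLast?_concat]; rfl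

lemma mem_le_MM (l : List ℕ) : ∀ x ∈ l, x ≤ MM l := by
  induction l with
  | nil => simp
  | cons a t ih =>
    intro x hx
    rcases List.mem_cons.mp hx with rfl | hx
    · show x ≤ List.foldr max 0 (x :: t)
      rw [List.foldr_cons]; omega
    · refine le_trans (ih x hx) ?_
      show List.foldr max 0 t ≤ List.foldr max 0 (a :: t)
      rw [List.foldr_cons]; omega

lemma ascents_cons_cons (a b : ℕ) (t : List ℕ) :
    ascents (a :: b :: t) = ascents (b :: t) + if a < b then 1 else 0 := by
  simp [ascents, List.countP_cons]

lemma ascents_concat (v : ℕ) : ∀ (l : List ℕ), l ≠ [] →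
    ascents (l ++ [v]) = ascents l + if LV l < v then 1 else 0 := by
  intro l
  induction l with
  | nil => simp
  | cons a t ih =>
    intro _
    cases t with
    | nil =>
      show ascents [a, v] = ascents [a] + _
      simp [ascents, LV, List.countP_cons]
      exact if_congr Iff.rfl rfl rfl
    | cons b t' =>
      have hlv : LV (a :: b :: t') = LV (b :: t') := by simp [LV]
      rw [show (a :: b :: t') ++ [v] = a :: b :: (t' ++ [v]) from rfl,
        ascents_cons_cons a b (t' ++ [v]),
        show b :: (t' ++ [v]) = (b :: t') ++ [v] from rfl,
        ih (by simp), ascents_cons_cons a b t', hlv]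
      omega
  
lemma ascents_le (l : List ℕ) : ascents l ≤ l.length - 1 := by
  unfold ascents
  calc (l.zip l.tail).countP _ ≤ (l.zip l.tail).length := List.countP_le_length
    _ = min l.length l.tail.length := List.length_zip
    _ ≤ l.length - 1 := by simp [List.length_tail]

lemma valid_nil : IsRestrictedAscentSeq [] := by intro i h; simp at h

lemma valid_take {l : List ℕ} (h : IsRestrictedAscentSeq l) (j : ℕ) :
    IsRestrictedAscentSeq (l.take j) := by
  intro i hi
  have hij : i < j := by simpa using lt_of_lt_of_le hi (by simp [List.length_take])
  have hil : i < l.length := by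
    have := hi; rw [List.length_take] at this; omega
  have e1 : (l.take j).take i = l.take i := by
    rw [List.take_take, min_eq_left (le_of_lt hij)]
  have e2 : (l.take j).get ⟨i, hi⟩ = l.get ⟨i, hil⟩ := by
    simp [List.get_eq_getElem, List.getElem_take]
  rw [e1, e2]
  exact h i hil

lemma valid_concat_iff {l : List ℕ} (hl : l ≠ []) (v : ℕ) :
    IsRestrictedAscentSeq (l ++ [v]) ↔
      IsRestrictedAscentSeq l ∧ (MM l - 1 ≤ v ∧ v ≤ ascents l + 1) := by
  have hlen : (l ++ [v]).length = l.length + 1 := by simp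
  have hlpos : 0 < l.length := List.length_pos_iff.mpr hl
  constructor
  · intro h
    refine ⟨?_, ?_⟩
    · have := valid_take h l.length
      rwa [List.take_left] at this
    · have hi : l.length < (l ++ [v]).length := by omega
      have h2 := h l.length hi
      rw [if_neg (by omega)] at h2
      have e1 : (l ++ [v]).take l.length = l := List.take_left
      have e2 : (l ++ [v]).get ⟨l.length, hi⟩ = v := by
        simp [List.get_eq_getElem]
      rw [e1, e2] at h2
      exact h2
  · rintro ⟨h1, h2, h3⟩ i hi
    rw [hlen] at hi
    rcases lt_or_eq_of_le (Nat.lt_succ_iff.mp hi) with hilt | hieq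
    · have e1 : (l ++ [v]).take i = l.take i :=
        List.take_append_of_le_length (le_of_lt hilt)
      have e2 : (l ++ [v]).get ⟨i, by omega⟩ = l.get ⟨i, hilt⟩ := by
        simp [List.get_eq_getElem, List.getElem_append_left hilt]
      rw [e1, e2]
      exact h1 i hilt
    · subst hieq
      rw [if_neg (by omega)]
      have e1 : (l ++ [v]).take l.length = l := List.take_left
      have e2 : (l ++ [v]).get ⟨l.length, by omega⟩ = v := by
        simp [List.get_eq_getElem]
      rw [e1, e2]
      exact ⟨h2, h3⟩

lemma valid_single_iff (v : ℕ) : IsRestrictedAscentSeq [v] ↔ v = 0 := by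
  constructor
  · intro h
    have := h 0 (by simp)
    simpa using this
  · rintro rfl i hi
    simp only [List.length_singleton] at hi
    cases i with
    | zero => simp [List.get_eq_getElem]
    | succ i => omega

lemma valid_get_le {l : List ℕ} (h : IsRestrictedAscentSeq l) (i : ℕ) (hi : i < l.length) :
    l.get ⟨i, hi⟩ ≤ i := by
  cases i with
  | zero =>
    have := h 0 hi
    simp at this
    simp [List.get_eq_getElem, this]
  | succ i =>
    have h2 := h (i+1) hi
    rw [if_neg (by omega)] at h2
    refine le_trans h2.2 ?_
    have h3 := ascents_le (l.take (i+1))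
    rw [List.length_take] at h3
    omega

def LSet : ℕ → Finset (List ℕ)
  | 0 => {[]}
  | n + 1 => (LSet n).biUnion fun l => (Finset.range (n + 1)).image fun v => l ++ [v]

lemma mem_LSet : ∀ {n : ℕ} {l : List ℕ}, l ∈ LSet n ↔
    l.length = n ∧ ∀ i (h : i < l.length), l.get ⟨i, h⟩ ≤ i := by
  intro n
  induction n with
  | zero =>
    intro l
    constructor
    · intro h
      have : l = [] := by simpa [LSet] using h
      subst this
      simp
    · intro ⟨h1, _⟩
      rw [List.length_eq_zero_iff] at h1
      simp [LSet, h1]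
  | succ n ih =>
    intro l
    constructor
    · intro h
      simp only [LSet, Finset.mem_biUnion, Finset.mem_image, Finset.mem_range] at h
      obtain ⟨a, ha, v, hv, rfl⟩ := h
      obtain ⟨halen, hget⟩ := ih.mp ha
      refine ⟨by simp [halen], ?_⟩
      intro i hi
      simp only [List.length_append, List.length_singleton, halen] at hi
      rcases lt_or_eq_of_le (Nat.lt_succ_iff.mp hi) with hilt | hieq
      · have : (a ++ [v]).get ⟨i, by simp; omega⟩ = a.get ⟨i, by omega⟩ := by
          simp [List.get_eq_getElem, List.getElem_append_left (halen ▸ hilt)]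
        rw [this]
        exact hget i _
      · subst hieq
        have : (a ++ [v]).get ⟨a.length, by simp⟩ = v := by
          simp [List.get_eq_getElem]
        simp only [halen] at this ⊢
        rw [this]
        omega
    · rintro ⟨hlen, hget⟩
      have hne : l ≠ [] := by intro h; subst h; simp at hlen
      simp only [LSet, Finset.mem_biUnion, Finset.mem_image, Finset.mem_range]
      refine ⟨l.dropLast, ?_, l.getLast hne, ?_, List.dropLast_append_getLast hne⟩
      · apply ih.mpr
        have hdl : l.dropLast.length = n := by simp [List.length_dropLast, hlen]
        refine ⟨hdl, ?_⟩
        intro i hi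
        have hil : i < l.length := by rw [hlen]; rw [hdl] at hi; omega
        have : l.dropLast.get ⟨i, hi⟩ = l.get ⟨i, hil⟩ := by
          simp [List.get_eq_getElem, List.getElem_dropLast]
        rw [this]
        exact hget i hil
      · have : l.getLast hne = l.get ⟨l.length - 1, by omega⟩ := by
          simp [List.get_eq_getElem, List.getLast_eq_getElem]
        rw [this]
        have := hget (l.length - 1) (by omega)
        omega

open Classical in
noncomputable def validF (n : ℕ) : Finset (List ℕ) :=
  (LSet n).filter IsRestrictedAscentSeq

lemma mem_validF {n : ℕ} {l : List ℕ} :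
    l ∈ validF n ↔ IsRestrictedAscentSeq l ∧ l.length = n := by
  classical
  constructor
  · intro h
    have h2 := Finset.mem_filter.mp h
    exact ⟨h2.2, (mem_LSet.mp h2.1).1⟩
  · intro ⟨h1, h2⟩
    exact Finset.mem_filter.mpr ⟨mem_LSet.mpr ⟨h2, fun i hi => valid_get_le h1 i hi⟩, h1⟩

lemma R_eq_card (n : ℕ) : R n = (validF n).card := by
  rw [R, Nat.card_congr (Equiv.subtypeEquivRight (q := fun l => l ∈ validF n)
    (fun l => mem_validF.symm)), Nat.card_eq_finsetCard]

lemma invariants : ∀ (l : List ℕ), l ≠ [] → IsRestrictedAscentSeq l →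
    (MM l = 0 → ascents l = 0 ∧ LV l = 0) ∧
    (MM l ≠ 0 → MM l ≤ ascents l ∧ (LV l = MM l ∨ LV l + 1 = MM l)) := by
  intro l
  induction l using List.reverseRecOn with
  | nil => intro h; exact absurd rfl h
  | append_singleton t v ih =>
    intro _ hv
    by_cases ht : t = []
    · subst ht
      have hv0 : v = 0 := (valid_single_iff v).mp (by simpa using hv)
      subst hv0
      refine ⟨fun _ => ⟨rfl, rfl⟩, fun h => absurd rfl h⟩
    · obtain ⟨hvt, hb, hb2⟩ := (valid_concat_iff ht v).mp hv
      have IH := ih ht hvt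
      rw [MM_concat, ascents_concat v t ht, LV_concat]
      by_cases hM : MM t = 0
      · obtain ⟨hA, hLV⟩ := IH.1 hM
        split_ifs with hlt
        · exact ⟨fun h0 => by omega, fun h0 => by omega⟩
        · exact ⟨fun h0 => by omega, fun h0 => by omega⟩
      · obtain ⟨hMA, hLV⟩ := IH.2 hM
        split_ifs with hlt
        · exact ⟨fun h0 => by omega, fun h0 => by omega⟩
        · exact ⟨fun h0 => by omega, fun h0 => by omega⟩

open PowerSeries Finset

def fgAux : ℕ → (ℕ → ℕ) × (ℕ → ℕ)
  | 0 => (fun _ => 1, fun _ => 1)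
  | n + 1 =>
    let p := fgAux n
    (fun v => p.1 v + p.2 (v + 1) + ∑ w ∈ Finset.range (v + 1), p.2 w,
     fun v => p.1 v + p.2 v + ∑ w ∈ Finset.range (v + 1), p.2 w)

def fN (n v : ℕ) : ℕ := (fgAux n).1 v
def gN (n v : ℕ) : ℕ := (fgAux n).2 v

def zN : ℕ → ℕ
  | 0 => 1
  | n + 1 => zN n + gN n 0

lemma fN_zero (v : ℕ) : fN 0 v = 1 := rfl
lemma gN_zero (v : ℕ) : gN 0 v = 1 := rfl
lemma fN_succ (n v : ℕ) :
    fN (n + 1) v = fN n v + gN n (v + 1) + ∑ w ∈ Finset.range (v + 1), gN n w := rfl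
lemma gN_succ (n v : ℕ) :
    gN (n + 1) v = fN n v + gN n v + ∑ w ∈ Finset.range (v + 1), gN n w := rfl

noncomputable def Cps : PowerSeries ℤ := PowerSeries.mk fun n => (catalan n : ℤ)

lemma coeff_one_succ (n : ℕ) : (coeff (n+1)) (1 : PowerSeries ℤ) = 0 := by
  simp [PowerSeries.coeff_one]

lemma Cps_eq : Cps = 1 + X * Cps ^ 2 := by
  ext n
  cases n with
  | zero => simp [Cps, catalan_zero]
  | succ n =>
    rw [map_add, coeff_succ_X_mul, coeff_one_succ, zero_add, pow_two, PowerSeries.coeff_mul]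
    simp only [Cps, PowerSeries.coeff_mk]
    rw [catalan_succ' n]
    push_cast
    rfl

noncomputable def qs : PowerSeries ℤ := Cps ^ 2 - X * Cps ^ 2

lemma qs_eq : qs = 1 + X * Cps ^ 3 := by
  unfold qs
  linear_combination (Cps + 1) * Cps_eq

lemma scalar_id (v : ℕ) :
    Cps ^ 3 * qs ^ v = X * Cps ^ 2 * qs ^ (v + 1) + X * Cps ^ 3 * qs ^ v + qs ^ (v + 1) := by
  induction v with
  | zero =>
    simp only [pow_zero, mul_one, pow_one]
    have h : qs = Cps ^ 2 - X * Cps ^ 2 := rfl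
    rw [h]
    linear_combination (Cps ^ 2 - X * Cps ^ 2) * Cps_eq
  | succ v ih =>
    have h : Cps ^ 3 * qs ^ (v+1) = (Cps ^3 * qs ^ v) * qs := by ring
    rw [h, ih]; ring

lemma geo_id (v : ℕ) :
    X * Cps ^ 3 * (∑ w ∈ Finset.range v, qs ^ w) = qs ^ v - 1 := by
  induction v with
  | zero => simp
  | succ v ih =>
    rw [Finset.sum_range_succ, mul_add, ih]
    have h : X * Cps ^ 3 * qs ^ v = qs ^ (v+1) - qs ^ v := by
      linear_combination (-qs ^ v) * qs_eq
    rw [h]; ring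

lemma master_g (v : ℕ) :
    Cps ^ 3 * qs ^ v =
      1 + X * (Cps ^ 2 * qs ^ (v + 1) + Cps ^ 3 * qs ^ v
        + Cps ^ 3 * ∑ w ∈ Finset.range (v + 1), qs ^ w) := by
  linear_combination scalar_id v - geo_id (v + 1)

lemma master_f (v : ℕ) :
    Cps ^ 2 * qs ^ (v + 1) =
      1 + X * (Cps ^ 2 * qs ^ (v + 1) + Cps ^ 3 * qs ^ (v + 1)
        + Cps ^ 3 * ∑ w ∈ Finset.range (v + 1), qs ^ w) := by
  have key : Cps ^ 2 = X * Cps ^ 2 + X * Cps ^ 3 + 1 := by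
    linear_combination (Cps + 1) * Cps_eq
  calc Cps ^ 2 * qs ^ (v+1) = (X * Cps ^ 2 + X * Cps ^ 3 + 1) * qs ^ (v+1) := by rw [← key]
    _ = 1 + X * (Cps ^ 2 * qs ^ (v + 1) + Cps ^ 3 * qs ^ (v + 1)
        + Cps ^ 3 * ∑ w ∈ Finset.range (v + 1), qs ^ w) := by
        linear_combination - geo_id (v + 1)

lemma coeff_succ_of_eq {A B : PowerSeries ℤ} (h : A = 1 + X * B) (n : ℕ) :
    coeff (n+1) A = coeff n B := by
  conv_lhs => rw [h]
  rw [map_add, coeff_succ_X_mul, coeff_one_succ, zero_add]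

lemma constantCoeff_Cps : constantCoeff Cps = 1 := by simp [Cps, catalan_zero]
lemma constantCoeff_qs : constantCoeff qs = 1 := by
  rw [qs_eq]; simp

lemma coeff_fg (n : ℕ) : ∀ v : ℕ,
    ((gN n v : ℤ) = coeff n (Cps ^ 3 * qs ^ v)) ∧
    ((fN n v : ℤ) = coeff n (Cps ^ 2 * qs ^ (v + 1))) := by
  induction n with
  | zero =>
    intro v
    constructor
    · rw [gN_zero, PowerSeries.coeff_zero_eq_constantCoeff, map_mul, map_pow, map_pow,
        constantCoeff_Cps, constantCoeff_qs]; simp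
    · rw [fN_zero, PowerSeries.coeff_zero_eq_constantCoeff, map_mul, map_pow, map_pow,
        constantCoeff_Cps, constantCoeff_qs]; simp
  | succ n ih =>
    intro v
    have hsum : (∑ w ∈ Finset.range (v+1), (gN n w : ℤ))
        = coeff n (Cps ^ 3 * ∑ w ∈ Finset.range (v + 1), qs ^ w) := by
      rw [Finset.mul_sum, map_sum]
      exact Finset.sum_congr rfl fun w _ => (ih w).1
    constructor
    · rw [gN_succ]
      push_cast
      rw [(ih v).2, (ih v).1, hsum, coeff_succ_of_eq (master_g v), map_add, map_add]
    · rw [fN_succ]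
      push_cast
      rw [(ih v).2, (ih (v+1)).1, hsum, coeff_succ_of_eq (master_f v), map_add, map_add]

lemma coeff_z (n : ℕ) : (zN n : ℤ) = coeff n (Cps ^ 2) := by
  induction n with
  | zero =>
    rw [PowerSeries.coeff_zero_eq_constantCoeff, map_pow, constantCoeff_Cps]
    simp [zN]
  | succ n ih =>
    have key : Cps ^ 2 = 1 + X * (Cps ^ 2 + Cps ^ 3) := by
      linear_combination (Cps + 1) * Cps_eq
    have hg := (coeff_fg n 0).1
    rw [pow_zero, mul_one] at hg
    show ((zN n + gN n 0 : ℕ) : ℤ) = _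
    push_cast
    rw [ih, hg, coeff_succ_of_eq key, map_add]

lemma zN_eq_catalan (n : ℕ) : zN n = catalan (n + 1) := by
  have h2 : coeff n (Cps ^ 2) = (catalan (n+1) : ℤ) := by
    rw [pow_two, PowerSeries.coeff_mul]
    simp only [Cps, PowerSeries.coeff_mk]
    rw [catalan_succ' n]
    push_cast
    rfl
  exact_mod_cast (coeff_z n).trans h2

open Classical in
noncomputable def cnt (k : ℕ) (l : List ℕ) : ℕ :=
  ((validF (l.length + k)).filter fun t => l <+: t).card

noncomputable def target (k : ℕ) (l : List ℕ) : ℕ :=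
  if MM l = 0 then zN k
  else if LV l = MM l then gN k (ascents l - MM l)
  else fN k (ascents l - MM l)

lemma cnt_zero {l : List ℕ} (h : IsRestrictedAscentSeq l) : cnt 0 l = 1 := by
  classical
  unfold cnt
  have : (validF (l.length + 0)).filter (fun t => l <+: t) = {l} := by
    ext t
    simp only [Finset.mem_filter, mem_validF, Finset.mem_singleton, Nat.add_zero]
    constructor
    · rintro ⟨⟨_, hlen⟩, hpre⟩
      exact (hpre.eq_of_length (by omega)).symm
    · rintro rfl
      exact ⟨⟨h, rfl⟩, List.prefix_rfl⟩
  rw [this, Finset.card_singleton]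

lemma cnt_succ {l : List ℕ} (hl : l ≠ []) (h : IsRestrictedAscentSeq l) (k : ℕ) :
    cnt (k + 1) l = ∑ v ∈ Finset.Icc (MM l - 1) (ascents l + 1), cnt k (l ++ [v]) := by
  classical
  unfold cnt
  have hsplit : (validF (l.length + (k + 1))).filter (fun t => l <+: t) =
      (Finset.Icc (MM l - 1) (ascents l + 1)).biUnion
        (fun v => (validF ((l ++ [v]).length + k)).filter fun t => (l ++ [v]) <+: t) := by
    ext t
    simp only [Finset.mem_filter, Finset.mem_biUnion, mem_validF, Finset.mem_Icc,
      List.length_append, List.length_singleton]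
    constructor
    · rintro ⟨⟨hvalid, hlen⟩, hpre⟩
      obtain ⟨s, rfl⟩ := hpre
      have hs : s ≠ [] := by
        intro hs; subst hs; simp at hlen
      obtain ⟨v, s', rfl⟩ := List.exists_cons_of_ne_nil hs
      have hidx : l.length < (l ++ v :: s').length := by simp
      have hcond := hvalid l.length hidx
      have hlpos : 0 < l.length := List.length_pos_iff.mpr hl
      rw [if_neg (by omega)] at hcond
      have e1 : (l ++ v :: s').take l.length = l := List.take_left
      have e2 : (l ++ v :: s').get ⟨l.length, hidx⟩ = v := by
        rw [List.get_eq_getElem, List.getElem_append_right (Nat.le_refl _)]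
        simp
      rw [e1, e2] at hcond
      refine ⟨v, ⟨hcond.1, hcond.2⟩, ⟨hvalid, by
        simp only [List.length_append, List.length_cons, List.length_singleton] at hlen ⊢
        omega⟩, ?_⟩
      exact ⟨s', by simp⟩
    · rintro ⟨v, _, ⟨hvalid, hlen⟩, hpre⟩
      refine ⟨⟨hvalid, by omega⟩, ?_⟩
      exact (List.prefix_append l [v]).trans hpre
  rw [hsplit, Finset.card_biUnion]
  intro v₁ h₁ v₂ h₂ hne
  simp only [Finset.disjoint_left, Finset.mem_filter]
  rintro t ⟨_, hp1⟩ ⟨_, hp2⟩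
  have : l ++ [v₁] = l ++ [v₂] := by
    apply (List.prefix_of_prefix_length_le hp1 hp2 (by simp)).eq_of_length
    simp
  exact hne (by simpa using List.append_cancel_left this)

lemma target_concat (k : ℕ) (l : List ℕ) (hl : l ≠ []) (v : ℕ) :
    target k (l ++ [v]) =
      if max (MM l) v = 0 then zN k
      else if v = max (MM l) v then
        gN k (ascents l + (if LV l < v then 1 else 0) - max (MM l) v)
      else fN k (ascents l + (if LV l < v then 1 else 0) - max (MM l) v) := by
  unfold target
  rw [MM_concat, ascents_concat v l hl, LV_concat]

lemma main_cnt : ∀ (k : ℕ) (l : List ℕ), l ≠ [] → IsRestrictedAscentSeq l →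
    cnt k l = target k l := by
  intro k
  induction k with
  | zero =>
    intro l hl h
    rw [cnt_zero h]
    unfold target
    split_ifs <;> rfl
  | succ k ih =>
    intro l hl h
    rw [cnt_succ hl h k]
    have inv := invariants l hl h
    have hsum : ∀ v ∈ Finset.Icc (MM l - 1) (ascents l + 1),
        cnt k (l ++ [v]) = target k (l ++ [v]) := by
      intro v hv
      have hv' := Finset.mem_Icc.mp hv
      exact ih (l ++ [v]) (by simp) ((valid_concat_iff hl v).mpr ⟨h, hv'.1, hv'.2⟩)
    rw [Finset.sum_congr rfl hsum]
    by_cases hM : MM l = 0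
    · obtain ⟨hA, hLV⟩ := inv.1 hM
      have hicc : Finset.Icc (MM l - 1) (ascents l + 1) = {0, 1} := by
        rw [hM, hA]
        decide
      rw [hicc, Finset.sum_pair (by omega)]
      rw [target_concat k l hl 0, target_concat k l hl 1]
      rw [if_pos (by omega), if_neg (by omega : ¬ max (MM l) 1 = 0),
        if_pos (by omega : 1 = max (MM l) 1)]
      have : ascents l + (if LV l < 1 then 1 else 0) - max (MM l) 1 = 0 := by
        split_ifs <;> omega
      rw [this]
      unfold target
      rw [if_pos hM]
      rfl
    · have hm1 : 1 ≤ MM l := Nat.one_le_iff_ne_zero.mpr hM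
      obtain ⟨hMA, hLVor⟩ := inv.2 hM
      have hIco : Finset.Icc (MM l - 1) (ascents l + 1) =
          Finset.Ico (MM l - 1) (ascents l + 2) := (Finset.Ico_add_one_right_eq_Icc _ _).symm
      rw [hIco, Finset.sum_Ico_eq_sum_range]
      have h2 : ascents l + 2 - (MM l - 1) = (ascents l - MM l) + 3 := by omega
      rw [h2]
      rw [Finset.sum_range_succ' _ ((ascents l - MM l) + 2),
        Finset.sum_range_succ' _ ((ascents l - MM l) + 1)]
      have e0 : target k (l ++ [MM l - 1 + 0]) = fN k (ascents l - MM l) := by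
        rw [target_concat k l hl _]
        rw [if_neg (by omega), if_neg (by omega)]
        congr 1
        split_ifs <;> omega
      have e2 : ∀ i ∈ Finset.range ((ascents l - MM l) + 1),
          target k (l ++ [MM l - 1 + (i + 1 + 1)]) = gN k (ascents l - MM l - i) := by
        intro i hi
        have hi' := Finset.mem_range.mp hi
        rw [target_concat k l hl _]
        rw [if_neg (by omega), if_pos (by omega)]
        congr 1
        rw [if_pos (by omega)]
        omega
      rw [e0, Finset.sum_congr rfl e2]
      have e3 : ∑ i ∈ Finset.range ((ascents l - MM l) + 1), gN k (ascents l - MM l - i)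
          = ∑ w ∈ Finset.range ((ascents l - MM l) + 1), gN k w := by
        rw [show (∑ i ∈ Finset.range ((ascents l - MM l) + 1), gN k (ascents l - MM l - i))
            = ∑ i ∈ Finset.range ((ascents l - MM l) + 1),
              gN k ((ascents l - MM l) + 1 - 1 - i) from
          Finset.sum_congr rfl fun i hi => by rw [Nat.add_sub_cancel]]
        exact Finset.sum_range_reflect _ _
      rw [e3]
      rcases hLVor with hLV | hLV
      · have e1 : target k (l ++ [MM l - 1 + (0 + 1)]) = gN k (ascents l - MM l) := by
          rw [target_concat k l hl _]
          rw [if_neg (by omega), if_pos (by omega)]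
          congr 1
          rw [if_neg (by omega)]
          omega
        rw [e1]
        unfold target
        rw [if_neg hM, if_pos hLV, gN_succ]
        ring
      · have e1 : target k (l ++ [MM l - 1 + (0 + 1)]) = gN k (ascents l - MM l + 1) := by
          rw [target_concat k l hl _]
          rw [if_neg (by omega), if_pos (by omega)]
          congr 1
          rw [if_pos (by omega)]
          omega
        rw [e1]
        unfold target
        rw [if_neg hM, if_neg (by omega), fN_succ]
        ring

lemma R_zero : R 0 = 1 := by
  rw [R_eq_card]
  have : validF 0 = {[]} := by
    ext l
    simp only [mem_validF, Finset.mem_singleton, List.length_eq_zero_iff]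
    constructor
    · rintro ⟨_, h⟩; exact h
    · rintro rfl; exact ⟨valid_nil, rfl⟩
  rw [this, Finset.card_singleton]

lemma valid_zero_singleton : IsRestrictedAscentSeq [0] := (valid_single_iff 0).mpr rfl

lemma R_succ (k : ℕ) : R (k + 1) = zN k := by
  classical
  have h1 : cnt k [0] = target k [0] := main_cnt k [0] (by simp) valid_zero_singleton
  have h2 : target k [0] = zN k := by
    unfold target
    rw [if_pos (show MM [0] = 0 from rfl)]
  have h3 : cnt k [0] = R (k + 1) := by
    unfold cnt
    rw [R_eq_card]
    have hfil : (validF ([0].length + k)).filter (fun t => [0] <+: t)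
        = validF (k + 1) := by
      have hlen : [0].length + k = k + 1 := by simp; omega
      rw [hlen]
      apply Finset.filter_true_of_mem
      intro t ht
      obtain ⟨hvalid, hlent⟩ := mem_validF.mp ht
      have hne : t ≠ [] := by intro h; subst h; simp at hlent
      obtain ⟨x, t', rfl⟩ := List.exists_cons_of_ne_nil hne
      have hx : x = 0 := by
        have := hvalid 0 (by simp)
        simpa using this
      subst hx
      exact List.cons_prefix_cons.mpr ⟨rfl, List.nil_prefix⟩
    rw [hfil]
  rw [← h3, h1, h2]

lemma R_eq_catalan : ∀ n, R n = catalan n := by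
  intro n
  cases n with
  | zero => rw [R_zero, catalan_zero]
  | succ k => rw [R_succ k, zN_eq_catalan k]

theorem R_catalan_recursion :
    R 0 = 1 ∧ ∀ n : ℕ, R (n + 1) = ∑ k ∈ Finset.range (n + 1), R k * R (n - k) := by
  refine ⟨R_zero, fun n => ?_⟩
  rw [R_eq_catalan (n + 1)]
  have : ∑ k ∈ Finset.range (n + 1), R k * R (n - k)
      = ∑ k ∈ Finset.range (n + 1), catalan k * catalan (n - k) := by
    refine Finset.sum_congr rfl fun k _ => ?_
    rw [R_eq_catalan k, R_eq_catalan (n - k)]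
  rw [this, ← Fin.sum_univ_eq_sum_range (fun i => catalan i * catalan (n - i)) (n + 1)]
  exact catalan_succ n
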